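/- Fix a tune-before-test level Δ ≥ 0 and suppose the cost function c is nondecreasing and convex with c(0)=0, and the score function v satisfies C1 (strictly increasing in θ), C2 (nondecreasing, concave, saturating in e), and C3 (non-decreasing effort gaps), and rank rewards R₁ ≥ R₂ ≥ ⋯ ≥ Rₙ with strict decrease where relevant. If e* is a pure-strategy Nash equilibrium of the induced follower game, then for all i, j with θᵢ > θⱼ, the equilibrium post-effort scores satisfy v(θᵢ, Δ + eᵢ*) ≥ v(θⱼ, Δ + eⱼ*). That is, equilibrium scores preserve the latent capability ordering up to ties. -/
import Mathlib

private lemma max_diff_le {a b c d D : ℝ} (hba : b ≤ a) (hdc : d ≤ c)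
    (hbd : b ≤ d) (hac : a ≤ c) (h : a - b ≤ c - d) :
    max a D - max b D ≤ max c D - max d D := by
  rcases max_cases a D with ⟨e1, f1⟩ | ⟨e1, f1⟩ <;>
  rcases max_cases b D with ⟨e2, f2⟩ | ⟨e2, f2⟩ <;>
  rcases max_cases c D with ⟨e3, f3⟩ | ⟨e3, f3⟩ <;>
  rcases max_cases d D with ⟨e4, f4⟩ | ⟨e4, f4⟩ <;>
  rw [e1, e2, e3, e4] <;> linarith

private lemma inf_mem_aux (v : ℝ → ℝ) (hv : Continuous v) (s : ℝ) (w : ℝ)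
    (hw : 0 ≤ w) (hws : s ≤ v w) :
    sInf {e | 0 ≤ e ∧ s ≤ v e} ∈ {e | 0 ≤ e ∧ s ≤ v e} := by
  have hcl : IsClosed {e : ℝ | 0 ≤ e ∧ s ≤ v e} :=
    (isClosed_le continuous_const continuous_id).inter
      (isClosed_le continuous_const hv)
  exact hcl.csInf_mem ⟨w, hw, hws⟩ ⟨0, fun e he => he.1⟩

set_option maxHeartbeats 2000000 in
/-- Order preservation at equilibrium. Fix a tune-before-test level
`Δ ≥ 0`. Under a nondecreasing convex cost with `c(0)=0`, a score function `v`
satisfying C1 (strictly increasing in capability), C2 (nondecreasing, concave,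
saturating in effort) and C3 (non-decreasing effort gaps), and monotone rank
rewards (with strict decrease where relevant), every pure-strategy Nash
equilibrium `e*` of the induced follower game has capability-ordered scores:
`θᵢ > θⱼ` implies `v(θᵢ, Δ + eᵢ*) ≥ v(θⱼ, Δ + eⱼ*)`.
Ranks are 1-indexed: `rank(i) = 1 + #{j : vⱼ > vᵢ}`, and agent `i`'s utility is
`R(rank(i)) − c(eᵢ)`. -/
theorem stmt4 {n : ℕ} (θ : Fin n → ℝ) (v : ℝ → ℝ → ℝ) (c : ℝ → ℝ) (R : ℕ → ℝ)
    (Δ : ℝ) (hΔ : 0 ≤ Δ)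
    (hθ : StrictAnti θ)
    (hcmono : Monotone c) (hcconv : ConvexOn ℝ (Set.Ici 0) c) (hc0 : c 0 = 0)
    (hvcont : ∀ t, Continuous (v t))
    (hC1 : ∀ e t t', t < t' → v t e < v t' e)
    (hC2mono : ∀ t, Monotone (v t))
    (hC2conc : ∀ t, ConcaveOn ℝ (Set.Ici 0) (v t))
    (hC2sat : ∀ t, ∃ L, Filter.Tendsto (v t) Filter.atTop (nhds L))
    (hC3 : ∀ t t', t < t' → ∀ s s', s ≤ s' →
      sInf {e | 0 ≤ e ∧ s ≤ v t e} - sInf {e | 0 ≤ e ∧ s ≤ v t' e} ≤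
      sInf {e | 0 ≤ e ∧ s' ≤ v t e} - sInf {e | 0 ≤ e ∧ s' ≤ v t' e})
    (hR : Antitone R)
    (hRstrict : ∀ k, 1 ≤ k → k < n → R (k + 1) < R k)
    (estar : Fin n → ℝ) (hnn : ∀ i, 0 ≤ estar i)
    (hPNE : ∀ i : Fin n, ∀ x, 0 ≤ x →
      R (1 + (Finset.univ.filter (fun j =>
          v (θ i) (Δ + x) < v (θ j) (Δ + Function.update estar i x j))).card) - c x ≤
      R (1 + (Finset.univ.filter (fun j =>
          v (θ i) (Δ + estar i) < v (θ j) (Δ + estar j))).card) - c (estar i)) :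
    ∀ i j, θ j < θ i → v (θ j) (Δ + estar j) ≤ v (θ i) (Δ + estar i) := by
  intro i j hij
  by_contra hcon
  push_neg at hcon
  -- hcon : v (θ i) (Δ + estar i) < v (θ j) (Δ + estar j)
  have hnni := hnn i
  have hnnj := hnn j
  -- ==== analytic part: the four minimal-effort levels ====
  have hmii : sInf {e | 0 ≤ e ∧ v (θ i) (Δ + estar i) ≤ v (θ i) e} ∈
      {e | 0 ≤ e ∧ v (θ i) (Δ + estar i) ≤ v (θ i) e} :=
    inf_mem_aux _ (hvcont _) _ (Δ + estar i) (by linarith) le_rfl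
  have hmij : sInf {e | 0 ≤ e ∧ v (θ j) (Δ + estar j) ≤ v (θ i) e} ∈
      {e | 0 ≤ e ∧ v (θ j) (Δ + estar j) ≤ v (θ i) e} :=
    inf_mem_aux _ (hvcont _) _ (Δ + estar j) (by linarith) (hC1 _ _ _ hij).le
  have hmji : sInf {e | 0 ≤ e ∧ v (θ i) (Δ + estar i) ≤ v (θ j) e} ∈
      {e | 0 ≤ e ∧ v (θ i) (Δ + estar i) ≤ v (θ j) e} :=
    inf_mem_aux _ (hvcont _) _ (Δ + estar j) (by linarith) hcon.le
  have hmjj : sInf {e | 0 ≤ e ∧ v (θ j) (Δ + estar j) ≤ v (θ j) e} ∈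
      {e | 0 ≤ e ∧ v (θ j) (Δ + estar j) ≤ v (θ j) e} :=
    inf_mem_aux _ (hvcont _) _ (Δ + estar j) (by linarith) le_rfl
  set Eii := sInf {e | 0 ≤ e ∧ v (θ i) (Δ + estar i) ≤ v (θ i) e} with hEiidef
  set Eij := sInf {e | 0 ≤ e ∧ v (θ j) (Δ + estar j) ≤ v (θ i) e} with hEijdef
  set Eji := sInf {e | 0 ≤ e ∧ v (θ i) (Δ + estar i) ≤ v (θ j) e} with hEjidef
  set Ejj := sInf {e | 0 ≤ e ∧ v (θ j) (Δ + estar j) ≤ v (θ j) e} with hEjjdef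
  have hbdd : ∀ (t s : ℝ), BddBelow {e | 0 ≤ e ∧ s ≤ v t e} :=
    fun t s => ⟨0, fun e he => he.1⟩
  -- basic inequalities among the E's
  have hEii_le : Eii ≤ Δ + estar i :=
    csInf_le (hbdd _ _) ⟨by linarith, le_rfl⟩
  have hEjj_le : Ejj ≤ Δ + estar j :=
    csInf_le (hbdd _ _) ⟨by linarith, le_rfl⟩
  have hEij_le_Ejj : Eij ≤ Ejj := by
    apply csInf_le_csInf (hbdd _ _) ⟨Δ + estar j, by constructor <;> [linarith; exact le_rfl]⟩
    intro e he
    exact ⟨he.1, he.2.trans (hC1 _ _ _ hij).le⟩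
  have hEii_le_Eij : Eii ≤ Eij := by
    apply csInf_le_csInf (hbdd _ _) ⟨Δ + estar j, by constructor <;> [linarith; exact (hC1 _ _ _ hij).le]⟩
    intro e he
    exact ⟨he.1, hcon.le.trans he.2⟩
  have hEii_le_Eji : Eii ≤ Eji := by
    apply csInf_le_csInf (hbdd _ _) ⟨Δ + estar j, by constructor <;> [linarith; exact hcon.le]⟩
    intro e he
    exact ⟨he.1, he.2.trans (hC1 _ _ _ hij).le⟩
  have hEji_le_Ejj : Eji ≤ Ejj := by
    apply csInf_le_csInf (hbdd _ _) ⟨Δ + estar j, by constructor <;> [linarith; exact le_rfl]⟩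
    intro e he
    exact ⟨he.1, hcon.le.trans he.2⟩
  have hC3' : Eji - Eii ≤ Ejj - Eij :=
    hC3 (θ j) (θ i) hij _ _ hcon.le
  have hmax : max Eji Δ - max Eii Δ ≤ max Ejj Δ - max Eij Δ :=
    max_diff_le hEii_le_Eji hEij_le_Ejj hEii_le_Eij hEji_le_Ejj hC3'
  -- deviation efforts
  set x0 := max Eij Δ - Δ with hx0def
  set y0 := max Eji Δ - Δ with hy0def
  have hx0nn : 0 ≤ x0 := by
    simp only [hx0def]; linarith [le_max_right Eij Δ]
  have hy0nn : 0 ≤ y0 := by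
    simp only [hy0def]; linarith [le_max_right Eji Δ]
  have hx0score : v (θ j) (Δ + estar j) ≤ v (θ i) (Δ + x0) := by
    have h1 : Δ + x0 = max Eij Δ := by simp [hx0def]
    rw [h1]
    exact hmij.2.trans (hC2mono _ (le_max_left _ _))
  have hy0score : v (θ i) (Δ + estar i) ≤ v (θ j) (Δ + y0) := by
    have h1 : Δ + y0 = max Eji Δ := by simp [hy0def]
    rw [h1]
    exact hmji.2.trans (hC2mono _ (le_max_left _ _))
  have hsum : x0 + y0 ≤ estar i + estar j := by
    have h1 : max Eii Δ ≤ Δ + estar i := max_le hEii_le (by linarith)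
    have h2 : max Ejj Δ ≤ Δ + estar j := max_le hEjj_le (by linarith)
    have h3 : Δ + x0 = max Eij Δ := by simp [hx0def]
    have h4 : Δ + y0 = max Eji Δ := by simp [hy0def]
    linarith
  have hx0_le : x0 ≤ estar j := by
    have h1 : max Eij Δ ≤ Δ + estar j := max_le (hEij_le_Ejj.trans hEjj_le) (by linarith)
    simp only [hx0def]; linarith
  -- ==== game part ====
  set Bi := Finset.filter (fun l => v (θ i) (Δ + estar i) < v (θ l) (Δ + estar l)) Finset.univ with hBidef
  set Bj := Finset.filter (fun l => v (θ j) (Δ + estar j) < v (θ l) (Δ + estar l)) Finset.univ with hBjdef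
  have hjBi : j ∈ Bi := Finset.mem_filter.mpr ⟨Finset.mem_univ _, hcon⟩
  have hiBi : i ∉ Bi := by
    intro h
    exact lt_irrefl _ (Finset.mem_filter.mp h).2
  have hBicard_pos : 1 ≤ Bi.card := Finset.card_pos.mpr ⟨j, hjBi⟩
  have hBicard_lt : Bi.card < n := by
    have hsub : Bi ⊆ Finset.univ.erase i :=
      Finset.subset_erase.mpr ⟨Finset.subset_univ _, hiBi⟩
    have := Finset.card_le_card hsub
    rw [Finset.card_erase_of_mem (Finset.mem_univ i), Finset.card_univ, Fintype.card_fin] at this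
    omega
  have hBjsub : Bj ⊆ Bi.erase j := by
    intro l hl
    have hl2 := (Finset.mem_filter.mp hl).2
    refine Finset.mem_erase.mpr ⟨?_, Finset.mem_filter.mpr ⟨Finset.mem_univ _, hcon.trans hl2⟩⟩
    intro h
    rw [h] at hl2
    exact lt_irrefl _ hl2
  have hBjcard : 1 + Bj.card ≤ Bi.card := by
    have := Finset.card_le_card hBjsub
    rw [Finset.card_erase_of_mem hjBi] at this
    omega
  -- deviation of i to x0
  have Pi := hPNE i x0 hx0nn
  have hDisub : (Finset.filter (fun l => v (θ i) (Δ + x0) < v (θ l) (Δ + Function.update estar i x0 l)) Finset.univ) ⊆ Bj := by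
    intro l hl
    have hl2 := (Finset.mem_filter.mp hl).2
    by_cases hli : l = i
    · rw [hli, Function.update_self] at hl2
      exact absurd hl2 (lt_irrefl _)
    · rw [Function.update_of_ne hli] at hl2
      exact Finset.mem_filter.mpr ⟨Finset.mem_univ _, lt_of_le_of_lt hx0score hl2⟩
  have P1 : R (1 + Bj.card) - c x0 ≤ R (1 + Bi.card) - c (estar i) := by
    have h1 : R (1 + Bj.card) ≤ R (1 + (Finset.filter (fun l => v (θ i) (Δ + x0) < v (θ l) (Δ + Function.update estar i x0 l)) Finset.univ).card) :=
      hR (by have := Finset.card_le_card hDisub; omega)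
    linarith
  -- deviation of j to y0
  have Pj := hPNE j y0 hy0nn
  have hDjsub : (Finset.filter (fun l => v (θ j) (Δ + y0) < v (θ l) (Δ + Function.update estar j y0 l)) Finset.univ) ⊆ Bi.erase j := by
    intro l hl
    have hl2 := (Finset.mem_filter.mp hl).2
    by_cases hlj : l = j
    · rw [hlj, Function.update_self] at hl2
      exact absurd hl2 (lt_irrefl _)
    · rw [Function.update_of_ne hlj] at hl2
      exact Finset.mem_erase.mpr ⟨hlj, Finset.mem_filter.mpr ⟨Finset.mem_univ _, lt_of_le_of_lt hy0score hl2⟩⟩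
  have P2 : R (Bi.card) - c y0 ≤ R (1 + Bj.card) - c (estar j) := by
    have h1 : R (Bi.card) ≤ R (1 + (Finset.filter (fun l => v (θ j) (Δ + y0) < v (θ l) (Δ + Function.update estar j y0 l)) Finset.univ).card) := by
      apply hR
      have := Finset.card_le_card hDjsub
      rw [Finset.card_erase_of_mem hjBi] at this
      omega
    linarith
  have P3 : R (1 + Bi.card) < R (Bi.card) := by
    have := hRstrict Bi.card hBicard_pos hBicard_lt
    rwa [Nat.add_comm] at this
  -- estar i < x0
  have hcx : c (estar i) < c x0 := by
    have h1 : R (Bi.card) ≤ R (1 + Bj.card) := hR (by omega)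
    linarith
  have hex : estar i < x0 := by
    by_contra hle
    push_neg at hle
    exact absurd (hcmono hle) (not_le.mpr hcx)
  -- convexity
  have hab : estar i < estar j := lt_of_lt_of_le hex hx0_le
  set t := (x0 - estar i) / (estar j - estar i) with htdef
  have hba : (0:ℝ) < estar j - estar i := by linarith
  have ht0 : 0 ≤ t := div_nonneg (by linarith) hba.le
  have ht1 : t ≤ 1 := (div_le_one hba).mpr (by linarith)
  have htmul : t * (estar j - estar i) = x0 - estar i := div_mul_cancel₀ _ hba.ne'
  have hcv1 : c x0 ≤ (1 - t) * c (estar i) + t * c (estar j) := by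
    have h := hcconv.2 (Set.mem_Ici.mpr hnni) (Set.mem_Ici.mpr hnnj) (by linarith : (0:ℝ) ≤ 1 - t) ht0 (by ring)
    have he : (1 - t) • estar i + t • estar j = x0 := by
      simp only [smul_eq_mul]; nlinarith [htmul]
    rw [he] at h
    simpa [smul_eq_mul] using h
  have hcv2 : c (estar i + estar j - x0) ≤ t * c (estar i) + (1 - t) * c (estar j) := by
    have h := hcconv.2 (Set.mem_Ici.mpr hnni) (Set.mem_Ici.mpr hnnj) ht0 (by linarith : (0:ℝ) ≤ 1 - t) (by ring)
    have he : t • estar i + (1 - t) • estar j = estar i + estar j - x0 := by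
      simp only [smul_eq_mul]; nlinarith [htmul]
    rw [he] at h
    simpa [smul_eq_mul] using h
  have hcy : c y0 ≤ c (estar i + estar j - x0) := hcmono (by linarith)
  linarith
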